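/- arXiv:2002.04178 — 4 statements merged into one kernel-verified Lean document; each statement's English description precedes it below -/
import Mathlib

section
/- Assume u, v : Ω → ℝ are g-convex and differentiable. Suppose x, ξ ∈ Ω satisfy u(x) > v(x) and Y_u(x) = Y_v(ξ). Then Z_u(x) < Z_v(ξ), and consequently u(z) > g(z, Y_v(ξ), Z_v(ξ)) for every z ∈ Ω; in particular u(ξ) > v(ξ). -/
open Set MeasureTheory Metric NNReal

noncomputable section

/-- `ℝⁿ` as Euclidean space. -/
abbrev Euc (n : ℕ) := EuclideanSpace ℝ (Fin n)

variable {n : ℕ}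

/-- The partial gradient `g_x` of a generating function. -/
def gradX (g : Euc n → Euc n → ℝ → ℝ) (x y : Euc n) (z : ℝ) : Euc n :=
  gradient (fun x' => g x' y z) x

/-- The partial gradient `g_y` of a generating function. -/
def gradY (g : Euc n → Euc n → ℝ → ℝ) (x y : Euc n) (z : ℝ) : Euc n :=
  gradient (fun y' => g x y' z) y

/-- The partial derivative `g_z` of a generating function. -/
def gradZ (g : Euc n → Euc n → ℝ → ℝ) (x y : Euc n) (z : ℝ) : ℝ :=
  deriv (fun z' => g x y z') z

/-- The matrix of mixed derivatives `g_{x_i y_j}`. -/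
def matGXY (g : Euc n → Euc n → ℝ → ℝ) (x y : Euc n) (z : ℝ) : Matrix (Fin n) (Fin n) ℝ :=
  fun i j => gradient (fun y' => gradX g x y' z i) y j

/-- The vector of mixed derivatives `g_{x_i z}`. -/
def vecGXZ (g : Euc n → Euc n → ℝ → ℝ) (x y : Euc n) (z : ℝ) : Fin n → ℝ :=
  fun i => deriv (fun z' => gradX g x y z' i) z

/-- The matrix of second derivatives `g_{x_i x_j}`. -/
def matGXX (g : Euc n → Euc n → ℝ → ℝ) (x y : Euc n) (z : ℝ) : Matrix (Fin n) (Fin n) ℝ :=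
  fun i j => gradient (fun x' => gradX g x' y z i) x j

/-- The matrix `E = g_{xy} - (g_z)⁻¹ g_{xz} ⊗ g_y` from condition A2. -/
def matE (g : Euc n → Euc n → ℝ → ℝ) (x y : Euc n) (z : ℝ) : Matrix (Fin n) (Fin n) ℝ :=
  fun i j => matGXY g x y z i j - (gradZ g x y z)⁻¹ * vecGXZ g x y z i * gradY g x y z j

/-- The set `𝒰 = {(x, g(x,y,z), g_x(x,y,z)) : (x,y,z) ∈ Γ}`. -/
def USet (g : Euc n → Euc n → ℝ → ℝ) (Γ : Set (Euc n × Euc n × ℝ)) :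
    Set (Euc n × ℝ × Euc n) :=
  {w | ∃ x y z, (x, y, z) ∈ Γ ∧ w = (x, g x y z, gradX g x y z)}

/-- Condition A1: for each `(x,u,p) ∈ 𝒰` there is a unique `(y,z)` with `(x,y,z) ∈ Γ`,
`g(x,y,z) = u` and `g_x(x,y,z) = p`. -/
def CondA1 (g : Euc n → Euc n → ℝ → ℝ) (Γ : Set (Euc n × Euc n × ℝ)) : Prop :=
  ∀ x u p, (x, u, p) ∈ USet g Γ →
    ∃! yz : Euc n × ℝ, (x, yz.1, yz.2) ∈ Γ ∧ g x yz.1 yz.2 = u ∧ gradX g x yz.1 yz.2 = p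

/-- Condition A1*: for fixed `(y,z)` the map `x ↦ -g_y/g_z (x,y,z)` is injective. -/
def CondA1Star (g : Euc n → Euc n → ℝ → ℝ) (Γ : Set (Euc n × Euc n × ℝ)) : Prop :=
  ∀ y z, Set.InjOn (fun x => (-(gradZ g x y z))⁻¹ • gradY g x y z) {x | (x, y, z) ∈ Γ}

/-- Condition A2: `g_z < 0` and `det E ≠ 0` on `Γ`. -/
def CondA2 (g : Euc n → Euc n → ℝ → ℝ) (Γ : Set (Euc n × Euc n × ℝ)) : Prop :=
  ∀ x y z, (x, y, z) ∈ Γ → gradZ g x y z < 0 ∧ (matE g x y z).det ≠ 0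

/-- `Γ` is a domain whose sections `I(x,y) = {z : (x,y,z) ∈ Γ}` are open intervals. -/
def GammaDomain (Γ : Set (Euc n × Euc n × ℝ)) : Prop :=
  IsOpen Γ ∧ ∀ x y : Euc n, OrdConnected {z : ℝ | (x, y, z) ∈ Γ}

/-- `g(·,y₀,z₀)` is a `g`-support of `u` at `x₀` (relative to `Ω`). -/
def IsGSupport (g : Euc n → Euc n → ℝ → ℝ) (Γ : Set (Euc n × Euc n × ℝ)) (Ω : Set (Euc n))
    (u : Euc n → ℝ) (x₀ y₀ : Euc n) (z₀ : ℝ) : Prop :=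
  (x₀, y₀, z₀) ∈ Γ ∧ u x₀ = g x₀ y₀ z₀ ∧ ∀ x ∈ Ω, (x, y₀, z₀) ∈ Γ ∧ g x y₀ z₀ ≤ u x

/-- `u` is `g`-convex on `Ω`. -/
def GConvexOn (g : Euc n → Euc n → ℝ → ℝ) (Γ : Set (Euc n × Euc n × ℝ)) (Ω : Set (Euc n))
    (u : Euc n → ℝ) : Prop :=
  ∀ x₀ ∈ Ω, ∃ y₀ z₀, IsGSupport g Γ Ω u x₀ y₀ z₀

/-- The maps `Y`, `Z` solve `g(x,Y(x,u,p),Z(x,u,p)) = u`, `g_x(x,Y(x,u,p),Z(x,u,p)) = p`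
on `𝒰`, with values in `Γ`. -/
def YZCompat (g : Euc n → Euc n → ℝ → ℝ) (Γ : Set (Euc n × Euc n × ℝ))
    (Y : Euc n → ℝ → Euc n → Euc n) (Z : Euc n → ℝ → Euc n → ℝ) : Prop :=
  ∀ x u p, (x, u, p) ∈ USet g Γ →
    (x, Y x u p, Z x u p) ∈ Γ ∧ g x (Y x u p) (Z x u p) = u ∧
      gradX g x (Y x u p) (Z x u p) = p

/-- `Y_u(x) = Y(x, u(x), Du(x))`. -/
def YMap (Y : Euc n → ℝ → Euc n → Euc n) (u : Euc n → ℝ) (x : Euc n) : Euc n :=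
  Y x (u x) (gradient u x)

/-- `Z_u(x) = Z(x, u(x), Du(x))`. -/
def ZMap (Z : Euc n → ℝ → Euc n → ℝ) (u : Euc n → ℝ) (x : Euc n) : ℝ :=
  Z x (u x) (gradient u x)

/-- The one-jet of `u` lies in `𝒰` on `Ω`. -/
def JetInU (g : Euc n → Euc n → ℝ → ℝ) (Γ : Set (Euc n × Euc n × ℝ)) (Ω : Set (Euc n))
    (u : Euc n → ℝ) : Prop :=
  ∀ x ∈ Ω, (x, u x, gradient u x) ∈ USet g Γ

/-- `u ∈ C^{1,1}(Ω)`: continuously differentiable with locally Lipschitz gradient. -/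
def C11On (Ω : Set (Euc n)) (u : Euc n → ℝ) : Prop :=
  (∀ x ∈ Ω, DifferentiableAt ℝ u x) ∧ ContinuousOn (fun x => gradient u x) Ω ∧
    ∀ x ∈ Ω, ∃ ε > 0, ∃ K : ℝ≥0, LipschitzOnWith K (fun y => gradient u y) (ball x ε ∩ Ω)

/-- `u` is a generalized solution of the generated Jacobian equation:
`∫_{Y_u(E)} f* = ∫_E f` for every measurable `E ⊆ Ω`. -/
def IsGenSol (Y : Euc n → ℝ → Euc n → Euc n) (Ω : Set (Euc n)) (f fstar : Euc n → ℝ)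
    (u : Euc n → ℝ) : Prop :=
  ∀ s ⊆ Ω, MeasurableSet s → ∫ y in YMap Y u '' s, fstar y = ∫ x in s, f x

/-- The second derivative (Hessian) matrix of `u` at `x`. -/
def Hess (u : Euc n → ℝ) (x : Euc n) : Matrix (Fin n) (Fin n) ℝ :=
  fun i j => (fderiv ℝ (fun y => gradient u y) x) (EuclideanSpace.single j 1) i

end

section AuxProof

variable {n : ℕ}

lemma gdiffAt_x {g : Euc n → Euc n → ℝ → ℝ} {Γ : Set (Euc n × Euc n × ℝ)}
    (hΓo : IsOpen Γ)
    (hg : ContDiffOn ℝ 4 (fun w : Euc n × Euc n × ℝ => g w.1 w.2.1 w.2.2) Γ)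
    {x y : Euc n} {z : ℝ} (hm : (x, y, z) ∈ Γ) :
    DifferentiableAt ℝ (fun x' => g x' y z) x := by
  have h1 : DifferentiableAt ℝ (fun w : Euc n × Euc n × ℝ => g w.1 w.2.1 w.2.2) (x, y, z) :=
    (hg.contDiffAt (hΓo.mem_nhds hm)).differentiableAt (by norm_num)
  exact h1.comp (f := fun x' : Euc n => ((x', y, z) : Euc n × Euc n × ℝ)) x (differentiableAt_id.prodMk (differentiableAt_const (y, z)))

lemma gdiffAt_z {g : Euc n → Euc n → ℝ → ℝ} {Γ : Set (Euc n × Euc n × ℝ)}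
    (hΓo : IsOpen Γ)
    (hg : ContDiffOn ℝ 4 (fun w : Euc n × Euc n × ℝ => g w.1 w.2.1 w.2.2) Γ)
    {x y : Euc n} {z : ℝ} (hm : (x, y, z) ∈ Γ) :
    DifferentiableAt ℝ (fun z' => g x y z') z := by
  have h1 : DifferentiableAt ℝ (fun w : Euc n × Euc n × ℝ => g w.1 w.2.1 w.2.2) (x, y, z) :=
    (hg.contDiffAt (hΓo.mem_nhds hm)).differentiableAt (by norm_num)
  exact h1.comp (f := fun z' : ℝ => ((x, y, z') : Euc n × Euc n × ℝ)) z ((differentiableAt_const x).prodMk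
    ((differentiableAt_const y).prodMk differentiableAt_id))

/-- Strict decrease of `g` in `z` on sections of `Γ`. -/
lemma g_strictAnti_z {g : Euc n → Euc n → ℝ → ℝ} {Γ : Set (Euc n × Euc n × ℝ)}
    (hΓ : GammaDomain Γ)
    (hg : ContDiffOn ℝ 4 (fun w : Euc n × Euc n × ℝ => g w.1 w.2.1 w.2.2) Γ)
    (hA2 : CondA2 g Γ)
    {x y : Euc n} {z₁ z₂ : ℝ} (h1 : (x, y, z₁) ∈ Γ) (h2 : (x, y, z₂) ∈ Γ)
    (hlt : z₁ < z₂) : g x y z₂ < g x y z₁ := by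
  set S : Set ℝ := {z | (x, y, z) ∈ Γ} with hS
  have hSo : IsOpen S := hΓ.1.preimage (by fun_prop : Continuous fun z : ℝ => ((x, y, z) : Euc n × Euc n × ℝ))
  have hSc : Convex ℝ S := convex_iff_ordConnected.2 (hΓ.2 x y)
  have hdiff : ∀ z ∈ S, DifferentiableAt ℝ (fun z' => g x y z') z :=
    fun z hz => gdiffAt_z hΓ.1 hg hz
  have hanti : StrictAntiOn (fun z' => g x y z') S := by
    apply strictAntiOn_of_deriv_neg hSc
    · exact fun z hz => (hdiff z hz).continuousAt.continuousWithinAt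
    · intro z hz
      rw [hSo.interior_eq] at hz
      exact (hA2 x y z hz).1
  exact hanti h1 h2 hlt

/-- A differentiable `g`-convex function has `(Y_u(x₀), Z_u(x₀))` as its support parameters. -/
lemma support_at {Ω : Set (Euc n)} {Γ : Set (Euc n × Euc n × ℝ)}
    {g : Euc n → Euc n → ℝ → ℝ} {Y : Euc n → ℝ → Euc n → Euc n} {Z : Euc n → ℝ → Euc n → ℝ}
    {u : Euc n → ℝ} {x₀ : Euc n}
    (hΩ : IsOpen Ω) (hΓ : GammaDomain Γ)
    (hg : ContDiffOn ℝ 4 (fun w : Euc n × Euc n × ℝ => g w.1 w.2.1 w.2.2) Γ)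
    (hA1 : CondA1 g Γ) (hYZ : YZCompat g Γ Y Z)
    (hudiff : DifferentiableAt ℝ u x₀)
    (hugc : GConvexOn g Γ Ω u) (hujet : JetInU g Γ Ω u) (hx₀ : x₀ ∈ Ω) :
    IsGSupport g Γ Ω u x₀ (YMap Y u x₀) (ZMap Z u x₀) := by
  obtain ⟨y₀, z₀, hΓ₀, heq, hsup⟩ := hugc x₀ hx₀
  have hgd : DifferentiableAt ℝ (fun x' => g x' y₀ z₀) x₀ := gdiffAt_x hΓ.1 hg hΓ₀
  have hloc : IsLocalMin (fun x' => u x' - g x' y₀ z₀) x₀ := by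
    filter_upwards [hΩ.mem_nhds hx₀] with w hw
    have h2 := (hsup w hw).2
    simp only [heq]
    linarith
  have hf0 : fderiv ℝ (fun x' => u x' - g x' y₀ z₀) x₀ = 0 := hloc.fderiv_eq_zero
  have hfe : fderiv ℝ u x₀ = fderiv ℝ (fun x' => g x' y₀ z₀) x₀ := by
    have := fderiv_fun_sub hudiff hgd
    rw [hf0] at this
    have h := this.symm
    rwa [sub_eq_zero] at h
  have hgrad : gradient u x₀ = gradX g x₀ y₀ z₀ := by
    unfold gradX gradient
    rw [hfe]
  have hU := hujet x₀ hx₀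
  have hun := hA1 x₀ (u x₀) (gradient u x₀) hU
  have hC := hYZ x₀ (u x₀) (gradient u x₀) hU
  have h1 : ((y₀, z₀) : Euc n × ℝ) = (YMap Y u x₀, ZMap Z u x₀) := by
    refine hun.unique ⟨hΓ₀, heq.symm, hgrad.symm⟩ ⟨hC.1, hC.2.1, hC.2.2⟩
  have hy : y₀ = YMap Y u x₀ := congrArg Prod.fst h1
  have hz : z₀ = ZMap Z u x₀ := congrArg Prod.snd h1
  rw [← hy, ← hz]
  exact ⟨hΓ₀, heq, hsup⟩

end AuxProof

open Set MeasureTheory Metric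

/-- If `u(x) > v(x)` and `Y_u(x) = Y_v(ξ)` then `Z_u(x) < Z_v(ξ)`, hence
`u(z) > g(z, Y_v(ξ), Z_v(ξ))` for all `z ∈ Ω`; in particular `u(ξ) > v(ξ)`. -/
theorem height_comparison_at_common_target
    {n : ℕ} {Ω : Set (Euc n)} {Γ : Set (Euc n × Euc n × ℝ)}
    {g : Euc n → Euc n → ℝ → ℝ} {Y : Euc n → ℝ → Euc n → Euc n} {Z : Euc n → ℝ → Euc n → ℝ}
    {u v : Euc n → ℝ} {x ξ : Euc n}
    (hΩ : IsOpen Ω) (hΩconn : IsConnected Ω) (hΩbdd : Bornology.IsBounded Ω)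
    (hΓ : GammaDomain Γ)
    (hg : ContDiffOn ℝ 4 (fun w : Euc n × Euc n × ℝ => g w.1 w.2.1 w.2.2) Γ)
    (hA1 : CondA1 g Γ) (hA1s : CondA1Star g Γ) (hA2 : CondA2 g Γ)
    (hYZ : YZCompat g Γ Y Z)
    (hudiff : ∀ x' ∈ Ω, DifferentiableAt ℝ u x') (hvdiff : ∀ x' ∈ Ω, DifferentiableAt ℝ v x')
    (hugc : GConvexOn g Γ Ω u) (hvgc : GConvexOn g Γ Ω v)
    (hujet : JetInU g Γ Ω u) (hvjet : JetInU g Γ Ω v)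
    (hx : x ∈ Ω) (hξ : ξ ∈ Ω)
    (hgt : v x < u x) (hY : YMap Y u x = YMap Y v ξ) :
    ZMap Z u x < ZMap Z v ξ ∧
      (∀ z ∈ Ω, g z (YMap Y v ξ) (ZMap Z v ξ) < u z) ∧
      v ξ < u ξ := by
  have zu := ZMap Z u x
  have hsupu := support_at hΩ hΓ hg hA1 hYZ (hudiff x hx) hugc hujet hx
  have hsupv := support_at hΩ hΓ hg hA1 hYZ (hvdiff ξ hξ) hvgc hvjet hξ
  rw [hY] at hsupu
  obtain ⟨hΓu, hequ, hallu⟩ := hsupu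
  obtain ⟨hΓv, heqv, hallv⟩ := hsupv
  -- at x: g x y zv ≤ v x < u x = g x y zu
  have hvx : g x (YMap Y v ξ) (ZMap Z v ξ) ≤ v x := (hallv x hx).2
  have hΓvx : (x, YMap Y v ξ, ZMap Z v ξ) ∈ Γ := (hallv x hx).1
  have hΓux : (x, YMap Y v ξ, ZMap Z u x) ∈ Γ := (hallu x hx).1
  have hux : u x = g x (YMap Y v ξ) (ZMap Z u x) := by
    have := hYZ x (u x) (gradient u x) (hujet x hx)
    have h2 := this.2.1
    rw [show Y x (u x) (gradient u x) = YMap Y u x from rfl, hY] at h2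
    exact h2.symm
  have hlt : ZMap Z u x < ZMap Z v ξ := by
    by_contra hcon
    push_neg at hcon
    rcases lt_or_eq_of_le hcon with h | h
    · have := g_strictAnti_z hΓ hg hA2 hΓvx hΓux h
      rw [← hux] at this
      linarith
    · rw [h] at hvx
      rw [← hux] at hvx
      linarith
  refine ⟨hlt, ?_, ?_⟩
  · intro z hz
    have hΓuz : (z, YMap Y v ξ, ZMap Z u x) ∈ Γ := (hallu z hz).1
    have hΓvz : (z, YMap Y v ξ, ZMap Z v ξ) ∈ Γ := (hallv z hz).1
    have h1 := g_strictAnti_z hΓ hg hA2 hΓuz hΓvz hlt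
    have h2 := (hallu z hz).2
    linarith
  · have h1 : g ξ (YMap Y v ξ) (ZMap Z v ξ) < u ξ := by
      have hΓuz : (ξ, YMap Y v ξ, ZMap Z u x) ∈ Γ := (hallu ξ hξ).1
      have hΓvz : (ξ, YMap Y v ξ, ZMap Z v ξ) ∈ Γ := (hallv ξ hξ).1
      have := g_strictAnti_z hΓ hg hA2 hΓuz hΓvz hlt
      have h2 := (hallu ξ hξ).2
      linarith
    rw [heqv]
    exact h1
end

section
/- Assume u, v : Ω → ℝ are g-convex and differentiable, x₀ ∈ Ω, u(x₀) = v(x₀) and Du(x₀) ≠ Dv(x₀). Then every neighbourhood of x₀ contains a point z with u(z) < g(z, Y_v(x₀), Z_v(x₀)); that is, for every ε > 0 there exists z ∈ B_ε(x₀) ∩ Ω with u(z) < g(z, Y_v(x₀), Z_v(x₀)). -/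
open Set MeasureTheory Metric NNReal

open Set MeasureTheory Metric

/-- If `u(x₀) = v(x₀)` but `Du(x₀) ≠ Dv(x₀)` then every neighbourhood of `x₀` contains a
point `z` with `u(z) < g(z, Y_v(x₀), Z_v(x₀))`. -/
theorem support_of_v_dips_below_u
    {n : ℕ} {Ω : Set (Euc n)} {Γ : Set (Euc n × Euc n × ℝ)}
    {g : Euc n → Euc n → ℝ → ℝ} {Y : Euc n → ℝ → Euc n → Euc n} {Z : Euc n → ℝ → Euc n → ℝ}
    {u v : Euc n → ℝ} {x₀ : Euc n}
    (hΩ : IsOpen Ω) (hΩconn : IsConnected Ω) (hΩbdd : Bornology.IsBounded Ω)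
    (hΓ : GammaDomain Γ)
    (hg : ContDiffOn ℝ 4 (fun w : Euc n × Euc n × ℝ => g w.1 w.2.1 w.2.2) Γ)
    (hA1 : CondA1 g Γ) (hA1s : CondA1Star g Γ) (hA2 : CondA2 g Γ)
    (hYZ : YZCompat g Γ Y Z)
    (hudiff : ∀ x ∈ Ω, DifferentiableAt ℝ u x) (hvdiff : ∀ x ∈ Ω, DifferentiableAt ℝ v x)
    (hugc : GConvexOn g Γ Ω u) (hvgc : GConvexOn g Γ Ω v)
    (hujet : JetInU g Γ Ω u) (hvjet : JetInU g Γ Ω v)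
    (hx₀ : x₀ ∈ Ω) (heq : u x₀ = v x₀) (hgrad : gradient u x₀ ≠ gradient v x₀) :
    ∀ ε > 0, ∃ z ∈ ball x₀ ε ∩ Ω, u z < g z (YMap Y v x₀) (ZMap Z v x₀) := by
  by_contra hcon
  push_neg at hcon
  obtain ⟨ε, hε, hall⟩ := hcon
  obtain ⟨hΓmem, hgval, hgx⟩ := hYZ x₀ (v x₀) (gradient v x₀) (hvjet x₀ hx₀)
  set y₁ := YMap Y v x₀ with hy₁
  set z₁ := ZMap Z v x₀ with hz₁
  have hΓmem' : (x₀, y₁, z₁) ∈ Γ := hΓmem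
  have hgval' : g x₀ y₁ z₁ = v x₀ := hgval
  have hF : DifferentiableAt ℝ (fun w : Euc n × Euc n × ℝ => g w.1 w.2.1 w.2.2)
      (x₀, y₁, z₁) :=
    (hg.differentiableOn (by norm_num)).differentiableAt (hΓ.1.mem_nhds hΓmem')
  have hh : DifferentiableAt ℝ (fun x' => g x' y₁ z₁) x₀ := by
    have hmap : DifferentiableAt ℝ (fun x' : Euc n => (x', y₁, z₁)) x₀ :=
      differentiableAt_id.prodMk (differentiableAt_const _)
    exact hF.comp x₀ hmap
  have hmin : IsLocalMin (fun z => u z - g z y₁ z₁) x₀ := by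
    have hnb : ball x₀ ε ∩ Ω ∈ nhds x₀ :=
      Filter.inter_mem (ball_mem_nhds _ hε) (hΩ.mem_nhds hx₀)
    refine Filter.eventually_of_mem hnb fun z hz => ?_
    have h1 : g z y₁ z₁ ≤ u z := hall z hz
    have h0 : u x₀ - g x₀ y₁ z₁ = 0 := by rw [hgval', heq]; ring
    simp only [h0]
    linarith
  have hzero := hmin.fderiv_eq_zero
  have hsub : fderiv ℝ (fun z => u z - g z y₁ z₁) x₀
      = fderiv ℝ u x₀ - fderiv ℝ (fun z => g z y₁ z₁) x₀ :=
    fderiv_sub (hudiff x₀ hx₀) hh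
  have hfd : fderiv ℝ u x₀ = fderiv ℝ (fun z => g z y₁ z₁) x₀ := by
    rw [hsub] at hzero; exact sub_eq_zero.mp hzero
  have hgrads : gradient u x₀ = gradient (fun z => g z y₁ z₁) x₀ := by
    unfold gradient; rw [hfd]
  apply hgrad
  rw [hgrads]
  exact hgx
end

section
/- Let Ω ⊂ ℝⁿ be open and let u, v ∈ C^{1,1}(Ω), i.e. continuously differentiable with locally Lipschitz gradients. If Du(x) = Dv(x) for every x in the coincidence set {x ∈ Ω : u(x) = v(x)}, then w := max{u, v} belongs to C^{1,1}(Ω); that is, w is continuously differentiable on Ω with locally Lipschitz gradient, and Dw = Du on {u ≥ v} and Dw = Dv on {v ≥ u}. -/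
open Set MeasureTheory Metric NNReal

open Set MeasureTheory Metric


section Helpers

open Filter Asymptotics Topology

variable {n : ℕ}

private lemma abs_max_le_abs_add_abs (A B : ℝ) : |max A B| ≤ |A| + |B| := by
  have h1 := le_abs_self A
  have h2 := le_abs_self B
  have h3 := neg_abs_le A
  have h4 := abs_nonneg A
  have h5 := abs_nonneg B
  rcases max_cases A B with ⟨h, _⟩ | ⟨h, _⟩ <;> rw [h] <;> rw [abs_le] <;>
    constructor <;> linarith [neg_abs_le B]

private lemma hasGradMax {Ω : Set (Euc n)} {u v : Euc n → ℝ}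
    (hu : ∀ x ∈ Ω, DifferentiableAt ℝ u x) (hv : ∀ x ∈ Ω, DifferentiableAt ℝ v x)
    (hgrad : ∀ x ∈ Ω, u x = v x → gradient u x = gradient v x)
    {x : Euc n} (hx : x ∈ Ω) (hle : v x ≤ u x) :
    HasGradientAt (fun y => max (u y) (v y)) (gradient u x) x := by
  rcases hle.lt_or_eq with h | h
  · -- strict case: eventually max = u
    have hc : ContinuousAt (fun y => v y - u y) x :=
      ((hv x hx).continuousAt.sub (hu x hx).continuousAt)
    have hmem : (fun y => v y - u y) ⁻¹' Iio 0 ∈ 𝓝 x :=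
      hc (Iio_mem_nhds (by simpa using sub_neg.mpr h))
    have hev : (fun y => max (u y) (v y)) =ᶠ[𝓝 x] u := by
      filter_upwards [hmem] with y hy
      exact max_eq_left (le_of_lt (by simpa [sub_neg] using hy))
    exact ((hu x hx).hasGradientAt).congr_of_eventuallyEq hev
  · -- coincidence case
    have heq : u x = v x := h.symm
    have hp : gradient u x = gradient v x := hgrad x hx heq
    set p := gradient u x with hpdef
    have hvB : HasGradientAt v p x := by rw [hp]; exact (hv x hx).hasGradientAt
    have hA := hasGradientAt_iff_isLittleO.1 (hu x hx).hasGradientAt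
    have hB := hasGradientAt_iff_isLittleO.1 hvB
    rw [hasGradientAt_iff_isLittleO]
    have habs := hA.abs_left.add hB.abs_left
    refine (Asymptotics.isBigO_of_le _ fun y => ?_).trans_isLittleO habs
    have hmax : max (u x) (v x) = u x := max_eq_left hle
    have hrw : max (u y) (v y) - max (u x) (v x) - (inner ℝ p (y - x) : ℝ) =
        max (u y - u x - (inner ℝ p (y - x) : ℝ)) (v y - v x - (inner ℝ p (y - x) : ℝ)) := by
      rw [hmax, heq, ← max_sub_sub_right, ← max_sub_sub_right]
    rw [hrw]
    have hnn : (0:ℝ) ≤ |u y - u x - (inner ℝ p (y - x) : ℝ)| + |v y - v x - (inner ℝ p (y - x) : ℝ)| :=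
      add_nonneg (abs_nonneg _) (abs_nonneg _)
    simp only [Real.norm_eq_abs, abs_of_nonneg hnn]
    exact (abs_max_le_abs_add_abs _ _).trans (le_abs_self _)

private lemma mixed_bound {u v : Euc n → ℝ} {s : Set (Euc n)} (hconv : Convex ℝ s)
    (hcu : ContinuousOn u s) (hcv : ContinuousOn v s) {K₁ K₂ : ℝ≥0}
    (hKu : LipschitzOnWith K₁ (fun y => gradient u y) s)
    (hKv : LipschitzOnWith K₂ (fun y => gradient v y) s)
    (hg : ∀ m ∈ s, u m = v m → gradient u m = gradient v m)
    {y z : Euc n} (hy : y ∈ s) (hz : z ∈ s) (hyu : v y ≤ u y) (hzv : u z ≤ v z) :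
    dist (gradient u y) (gradient v z) ≤ (max K₁ K₂ : ℝ≥0) * dist y z := by
  -- find a coincidence point on the segment
  set γ : ℝ → Euc n := fun t => (1 - t) • y + t • z with hγ
  have hγseg : ∀ t ∈ Icc (0:ℝ) 1, γ t ∈ segment ℝ y z := by
    intro t ht
    rw [segment_eq_image]
    exact ⟨t, ht, rfl⟩
  have hseg : ∀ t ∈ Icc (0:ℝ) 1, γ t ∈ s := fun t ht =>
    hconv.segment_subset hy hz (hγseg t ht)
  have hγc : Continuous γ := by fun_prop
  set φ : ℝ → ℝ := fun t => u (γ t) - v (γ t) with hφ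
  have hφc : ContinuousOn φ (Icc 0 1) :=
    (hcu.sub hcv).comp hγc.continuousOn hseg
  have hγ0 : γ 0 = y := by simp [hγ]
  have hγ1 : γ 1 = z := by simp [hγ]
  have hφ0 : 0 ≤ φ 0 := by simp [hφ, hγ0]; linarith
  have hφ1 : φ 1 ≤ 0 := by simp [hφ, hγ1]; linarith
  have h0mem : (0:ℝ) ∈ Icc (φ 1) (φ 0) := ⟨hφ1, hφ0⟩
  obtain ⟨t, ht, hφt⟩ := intermediate_value_Icc' zero_le_one hφc h0mem
  set m := γ t with hm
  have hms : m ∈ s := hseg t ht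
  have hum : u m = v m := by
    have : u m - v m = 0 := hφt
    linarith
  have hgm : gradient u m = gradient v m := hg m hms hum
  have hdist : dist y m + dist m z = dist y z :=
    dist_add_dist_of_mem_segment (hγseg t ht)
  have h1 : dist (gradient u y) (gradient u m) ≤ (K₁ : ℝ) * dist y m :=
    hKu.dist_le_mul y hy m hms
  have h2 : dist (gradient v m) (gradient v z) ≤ (K₂ : ℝ) * dist m z :=
    hKv.dist_le_mul m hms z hz
  have hK1 : (K₁ : ℝ) ≤ (max K₁ K₂ : ℝ≥0) := by exact_mod_cast le_max_left K₁ K₂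
  have hK2 : (K₂ : ℝ) ≤ (max K₁ K₂ : ℝ≥0) := by exact_mod_cast le_max_right K₁ K₂
  calc dist (gradient u y) (gradient v z)
      ≤ dist (gradient u y) (gradient u m) + dist (gradient u m) (gradient v z) :=
        dist_triangle _ _ _
    _ = dist (gradient u y) (gradient u m) + dist (gradient v m) (gradient v z) := by
        rw [hgm]
    _ ≤ (K₁ : ℝ) * dist y m + (K₂ : ℝ) * dist m z := add_le_add h1 h2
    _ ≤ (max K₁ K₂ : ℝ≥0) * dist y m + (max K₁ K₂ : ℝ≥0) * dist m z :=
        add_le_add (mul_le_mul_of_nonneg_right hK1 dist_nonneg)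
          (mul_le_mul_of_nonneg_right hK2 dist_nonneg)
    _ = (max K₁ K₂ : ℝ≥0) * dist y z := by rw [← mul_add, hdist]

end Helpers

open Filter Topology

/-- If `u, v ∈ C^{1,1}(Ω)` have equal gradients on the coincidence set `{u = v}`,
then `w = max{u,v} ∈ C^{1,1}(Ω)`, with `Dw = Du` on `{u ≥ v}` and `Dw = Dv` on `{v ≥ u}`. -/
theorem max_of_C11_is_C11
    {n : ℕ} {Ω : Set (Euc n)} {u v : Euc n → ℝ}
    (hΩ : IsOpen Ω)
    (hu11 : C11On Ω u) (hv11 : C11On Ω v)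
    (hgrad : ∀ x ∈ Ω, u x = v x → gradient u x = gradient v x) :
    C11On Ω (fun x => max (u x) (v x)) ∧
      (∀ x ∈ Ω, v x ≤ u x → gradient (fun x' => max (u x') (v x')) x = gradient u x) ∧
      (∀ x ∈ Ω, u x ≤ v x → gradient (fun x' => max (u x') (v x')) x = gradient v x) := by
  classical
  set w : Euc n → ℝ := fun x => max (u x) (v x) with hw
  have hwsymm : (fun y => max (v y) (u y)) = w := funext fun y => max_comm _ _
  have hgrad' : ∀ x ∈ Ω, v x = u x → gradient v x = gradient u x :=
    fun x hx h => (hgrad x hx h.symm).symm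
  have key : ∀ x ∈ Ω, v x ≤ u x → HasGradientAt w (gradient u x) x :=
    fun x hx h => hasGradMax hu11.1 hv11.1 hgrad hx h
  have key' : ∀ x ∈ Ω, u x ≤ v x → HasGradientAt w (gradient v x) x := by
    intro x hx h
    have := hasGradMax hv11.1 hu11.1 hgrad' hx h
    rwa [hwsymm] at this
  have hgw_u : ∀ x ∈ Ω, v x ≤ u x → gradient w x = gradient u x :=
    fun x hx h => (key x hx h).gradient
  have hgw_v : ∀ x ∈ Ω, u x ≤ v x → gradient w x = gradient v x :=
    fun x hx h => (key' x hx h).gradient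
  have hdiff : ∀ x ∈ Ω, DifferentiableAt ℝ w x := by
    intro x hx
    rcases le_total (v x) (u x) with h | h
    · exact (key x hx h).differentiableAt
    · exact (key' x hx h).differentiableAt
  refine ⟨⟨hdiff, ?_, ?_⟩, hgw_u, hgw_v⟩
  · -- continuity of the gradient on Ω
    intro x hx
    rcases lt_trichotomy (v x) (u x) with h | h | h
    · -- locally on the u side
      have hO : IsOpen (Ω ∩ (fun y => u y - v y) ⁻¹' Ioi 0) := by
        apply ContinuousOn.isOpen_inter_preimage ?_ hΩ isOpen_Ioi
        exact fun y hy => ((hu11.1 y hy).continuousAt.sub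
          (hv11.1 y hy).continuousAt).continuousWithinAt
      have hxO : x ∈ Ω ∩ (fun y => u y - v y) ⁻¹' Ioi 0 := ⟨hx, by simpa using sub_pos.mpr h⟩
      have hev : (fun y => gradient w y) =ᶠ[𝓝 x] (fun y => gradient u y) := by
        filter_upwards [hO.mem_nhds hxO] with y hy
        exact hgw_u y hy.1 (le_of_lt (by simpa [sub_pos] using hy.2))
      have hcu : ContinuousWithinAt (fun y => gradient u y) Ω x := hu11.2.1 x hx
      exact (hcu.congr_of_eventuallyEq (hev.filter_mono nhdsWithin_le_nhds)
        (hgw_u x hx h.le)).mono (le_refl _)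
    · -- coincidence point: squeeze
      have heq : u x = v x := h.symm
      set p := gradient u x with hp
      have hpv : gradient v x = p := (hgrad x hx heq).symm
      have hpu : Filter.Tendsto (fun y => gradient u y) (𝓝[Ω] x) (𝓝 p) := hu11.2.1 x hx
      have hpvT : Filter.Tendsto (fun y => gradient v y) (𝓝[Ω] x) (𝓝 p) := by
        have h' := hv11.2.1 x hx
        unfold ContinuousWithinAt at h'
        rwa [show (fun x => gradient v x) x = p from hpv] at h'
      have h1 : Filter.Tendsto
          (fun y => ‖gradient u y - p‖ + ‖gradient v y - p‖) (𝓝[Ω] x) (𝓝 0) := by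
        have hA : Tendsto (fun y => ‖gradient u y - p‖) (𝓝[Ω] x) (𝓝 0) := by
          simpa using (hpu.sub (tendsto_const_nhds : Tendsto _ _ (𝓝 p))).norm
        have hB : Tendsto (fun y => ‖gradient v y - p‖) (𝓝[Ω] x) (𝓝 0) := by
          simpa using (hpvT.sub (tendsto_const_nhds : Tendsto _ _ (𝓝 p))).norm
        simpa using hA.add hB
      have h2 : ∀ᶠ y in 𝓝[Ω] x, ‖gradient w y - p‖ ≤
          ‖gradient u y - p‖ + ‖gradient v y - p‖ := by
        filter_upwards [self_mem_nhdsWithin] with y hy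
        rcases le_total (v y) (u y) with hle | hle
        · rw [hgw_u y hy hle]
          exact le_add_of_nonneg_right (norm_nonneg _)
        · rw [hgw_v y hy hle]
          exact le_add_of_nonneg_left (norm_nonneg _)
      have h3 : Filter.Tendsto (fun y => ‖gradient w y - p‖) (𝓝[Ω] x) (𝓝 0) :=
        squeeze_zero' (Filter.Eventually.of_forall fun y => norm_nonneg _) h2 h1
      have hwx : gradient w x = p := hgw_u x hx h.le
      have : Filter.Tendsto (fun y => gradient w y) (𝓝[Ω] x) (𝓝 p) :=
        tendsto_iff_norm_sub_tendsto_zero.2 h3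
      rw [ContinuousWithinAt, hwx]
      exact this
    · -- locally on the v side
      have hO : IsOpen (Ω ∩ (fun y => v y - u y) ⁻¹' Ioi 0) := by
        apply ContinuousOn.isOpen_inter_preimage ?_ hΩ isOpen_Ioi
        exact fun y hy => ((hv11.1 y hy).continuousAt.sub
          (hu11.1 y hy).continuousAt).continuousWithinAt
      have hxO : x ∈ Ω ∩ (fun y => v y - u y) ⁻¹' Ioi 0 := ⟨hx, by simpa using sub_pos.mpr h⟩
      have hev : (fun y => gradient w y) =ᶠ[𝓝 x] (fun y => gradient v y) := by
        filter_upwards [hO.mem_nhds hxO] with y hy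
        exact hgw_v y hy.1 (le_of_lt (by simpa [sub_pos] using hy.2))
      have hcv : ContinuousWithinAt (fun y => gradient v y) Ω x := hv11.2.1 x hx
      exact hcv.congr_of_eventuallyEq (hev.filter_mono nhdsWithin_le_nhds) (hgw_v x hx h.le)
  · -- local Lipschitz bound for the gradient
    intro x hx
    obtain ⟨ε₁, hε₁, K₁, hK₁⟩ := hu11.2.2 x hx
    obtain ⟨ε₂, hε₂, K₂, hK₂⟩ := hv11.2.2 x hx
    obtain ⟨ε₀, hε₀, hball⟩ := Metric.isOpen_iff.1 hΩ x hx
    set ε := min ε₀ (min ε₁ ε₂) with hε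
    have hεpos : 0 < ε := lt_min hε₀ (lt_min hε₁ hε₂)
    refine ⟨ε, hεpos, max K₁ K₂, ?_⟩
    set s := ball x ε with hs
    have hsΩ : s ⊆ Ω := fun y hy => hball (ball_subset_ball (min_le_left _ _) hy)
    have hsub : ball x ε ∩ Ω = s := inter_eq_left.2 hsΩ
    rw [hsub]
    have hs1 : s ⊆ ball x ε₁ ∩ Ω := fun y hy =>
      ⟨ball_subset_ball ((min_le_right _ _).trans (min_le_left _ _)) hy, hsΩ hy⟩
    have hs2 : s ⊆ ball x ε₂ ∩ Ω := fun y hy =>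
      ⟨ball_subset_ball ((min_le_right _ _).trans (min_le_right _ _)) hy, hsΩ hy⟩
    have hKu : LipschitzOnWith K₁ (fun y => gradient u y) s := hK₁.mono hs1
    have hKv : LipschitzOnWith K₂ (fun y => gradient v y) s := hK₂.mono hs2
    have hconv : Convex ℝ s := convex_ball x ε
    have hcu : ContinuousOn u s := fun y hy =>
      (hu11.1 y (hsΩ hy)).continuousAt.continuousWithinAt
    have hcv : ContinuousOn v s := fun y hy =>
      (hv11.1 y (hsΩ hy)).continuousAt.continuousWithinAt
    have hgs : ∀ m ∈ s, u m = v m → gradient u m = gradient v m :=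
      fun m hm => hgrad m (hsΩ hm)
    have hgs' : ∀ m ∈ s, v m = u m → gradient v m = gradient u m :=
      fun m hm h => (hgs m hm h.symm).symm
    rw [lipschitzOnWith_iff_dist_le_mul]
    intro y hy z hz
    have hKcast : ((max K₁ K₂ : ℝ≥0) : ℝ) = max (K₁ : ℝ) (K₂ : ℝ) := by
      exact_mod_cast rfl
    rcases le_total (v y) (u y) with hyu | hyv
    · rcases le_total (v z) (u z) with hzu | hzv
      · rw [hgw_u y (hsΩ hy) hyu, hgw_u z (hsΩ hz) hzu]
        calc dist (gradient u y) (gradient u z) ≤ (K₁ : ℝ) * dist y z :=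
              hKu.dist_le_mul y hy z hz
          _ ≤ ((max K₁ K₂ : ℝ≥0) : ℝ) * dist y z := by
              apply mul_le_mul_of_nonneg_right _ dist_nonneg
              exact_mod_cast le_max_left K₁ K₂
      · rw [hgw_u y (hsΩ hy) hyu, hgw_v z (hsΩ hz) hzv]
        exact mixed_bound hconv hcu hcv hKu hKv hgs hy hz hyu hzv
    · rcases le_total (u z) (v z) with hzv | hzu
      · rw [hgw_v y (hsΩ hy) hyv, hgw_v z (hsΩ hz) hzv]
        calc dist (gradient v y) (gradient v z) ≤ (K₂ : ℝ) * dist y z :=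
              hKv.dist_le_mul y hy z hz
          _ ≤ ((max K₁ K₂ : ℝ≥0) : ℝ) * dist y z := by
              apply mul_le_mul_of_nonneg_right _ dist_nonneg
              exact_mod_cast le_max_right K₁ K₂
      · rw [hgw_v y (hsΩ hy) hyv, hgw_u z (hsΩ hz) hzu]
        have hmb := mixed_bound hconv hcv hcu hKv hKu hgs' hy hz hyv hzu
        calc dist (gradient v y) (gradient u z) ≤ ((max K₂ K₁ : ℝ≥0) : ℝ) * dist y z := hmb
          _ = ((max K₁ K₂ : ℝ≥0) : ℝ) * dist y z := by rw [max_comm]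
end

section
/- Assume u, v : Ω → ℝ are g-convex. Then w := max{u, v} is g-convex. If moreover u, v ∈ C^{1,1}(Ω) and Du = Dv on {x ∈ Ω : u(x) = v(x)}, then w ∈ C^{1,1}(Ω). -/
open Set MeasureTheory Metric NNReal

open Set MeasureTheory Metric


open Asymptotics Filter Set Metric

lemma hasFDerivAt_max_of_eq {E : Type*} [NormedAddCommGroup E] [NormedSpace ℝ E]
    {u v : E → ℝ} {f : E →L[ℝ] ℝ} {x : E} (hu : HasFDerivAt u f x) (hv : HasFDerivAt v f x)
    (h : u x = v x) : HasFDerivAt (fun y => max (u y) (v y)) f x := by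
  have hu' := hu.isLittleO
  have hv' := hv.isLittleO
  refine HasFDerivAt.of_isLittleO ?_
  have h1 : (fun y => ‖u y - u x - f (y - x)‖ + ‖v y - v x - f (y - x)‖) =o[nhds x]
      fun y => y - x := hu'.norm_left.add hv'.norm_left
  refine (Asymptotics.isBigO_of_le _ fun y => ?_).trans_isLittleO h1
  have key := abs_max_sub_max_le_max (u y) (v y) (u x + f (y - x)) (v x + f (y - x))
  rw [max_add_add_right] at key
  have h2 : ‖(‖u y - u x - f (y - x)‖ + ‖v y - v x - f (y - x)‖)‖
      = ‖u y - u x - f (y - x)‖ + ‖v y - v x - f (y - x)‖ :=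
    Real.norm_of_nonneg (by positivity)
  rw [h2]
  calc ‖max (u y) (v y) - max (u x) (v x) - f (y - x)‖
      = |max (u y) (v y) - (max (u x) (v x) + f (y - x))| := by rw [Real.norm_eq_abs, sub_add_eq_sub_sub]
    _ ≤ max |u y - (u x + f (y - x))| |v y - (v x + f (y - x))| := key
    _ ≤ ‖u y - u x - f (y - x)‖ + ‖v y - v x - f (y - x)‖ := by
        simp only [Real.norm_eq_abs, sub_add_eq_sub_sub]
        exact max_le (le_add_of_nonneg_right (abs_nonneg _)) (le_add_of_nonneg_left (abs_nonneg _))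

lemma hasGradientAt_max_left {E : Type*} [NormedAddCommGroup E] [InnerProductSpace ℝ E]
    [CompleteSpace E] {u v : E → ℝ} {x : E}
    (hu : DifferentiableAt ℝ u x) (hv : DifferentiableAt ℝ v x)
    (heq : u x = v x → gradient u x = gradient v x) (hle : v x ≤ u x) :
    HasGradientAt (fun y => max (u y) (v y)) (gradient u x) x := by
  rcases lt_or_eq_of_le hle with hlt | heqx
  · have hcont : ContinuousAt (fun y => u y - v y) x := hu.continuousAt.sub hv.continuousAt
    have hpos : ∀ᶠ y in nhds x, v y < u y := by
      have hmem : Set.Ioi (0:ℝ) ∈ nhds (u x - v x) := Ioi_mem_nhds (by linarith)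
      filter_upwards [hcont hmem] with y hy
      simpa [sub_pos] using hy
    have hev : (fun y => max (u y) (v y)) =ᶠ[nhds x] u := by
      filter_upwards [hpos] with y hy using max_eq_left hy.le
    exact hu.hasGradientAt.congr_of_eventuallyEq hev
  · have h1 := hu.hasGradientAt
    have h2 : HasGradientAt v (gradient u x) x := by
      rw [heq heqx.symm]; exact hv.hasGradientAt
    rw [hasGradientAt_iff_hasFDerivAt] at h1 h2 ⊢
    exact hasFDerivAt_max_of_eq h1 h2 heqx.symm

lemma hasGradientAt_max_right {E : Type*} [NormedAddCommGroup E] [InnerProductSpace ℝ E]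
    [CompleteSpace E] {u v : E → ℝ} {x : E}
    (hu : DifferentiableAt ℝ u x) (hv : DifferentiableAt ℝ v x)
    (heq : u x = v x → gradient u x = gradient v x) (hle : u x ≤ v x) :
    HasGradientAt (fun y => max (u y) (v y)) (gradient v x) x := by
  have := hasGradientAt_max_left hv hu (fun h => (heq h.symm).symm) hle
  refine this.congr_of_eventuallyEq (Filter.Eventually.of_forall fun y => max_comm (u y) (v y))
/-- The maximum of two `g`-convex functions is `g`-convex; if moreover `u, v ∈ C^{1,1}(Ω)`
with `Du = Dv` on `{u = v}` then the maximum is `C^{1,1}(Ω)`. -/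
theorem max_gconvex_and_C11
    {n : ℕ} {Ω : Set (Euc n)} {Γ : Set (Euc n × Euc n × ℝ)}
    {g : Euc n → Euc n → ℝ → ℝ} {u v : Euc n → ℝ}
    (hΩ : IsOpen Ω) (hΩconn : IsConnected Ω) (hΩbdd : Bornology.IsBounded Ω)
    (hΓ : GammaDomain Γ)
    (hg : ContDiffOn ℝ 4 (fun w : Euc n × Euc n × ℝ => g w.1 w.2.1 w.2.2) Γ)
    (hA1 : CondA1 g Γ) (hA1s : CondA1Star g Γ) (hA2 : CondA2 g Γ)
    (hugc : GConvexOn g Γ Ω u) (hvgc : GConvexOn g Γ Ω v) :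
    GConvexOn g Γ Ω (fun x => max (u x) (v x)) ∧
      (C11On Ω u → C11On Ω v →
        (∀ x ∈ Ω, u x = v x → gradient u x = gradient v x) →
        C11On Ω (fun x => max (u x) (v x))) := by
  constructor
  · intro x₀ hx₀
    rcases le_total (v x₀) (u x₀) with h | h
    · obtain ⟨y₀, z₀, h1, h2, h3⟩ := hugc x₀ hx₀
      exact ⟨y₀, z₀, h1, by simpa [max_eq_left h] using h2,
        fun x hx => ⟨(h3 x hx).1, ((h3 x hx).2).trans (le_max_left _ _)⟩⟩
    · obtain ⟨y₀, z₀, h1, h2, h3⟩ := hvgc x₀ hx₀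
      exact ⟨y₀, z₀, h1, by simpa [max_eq_right h] using h2,
        fun x hx => ⟨(h3 x hx).1, ((h3 x hx).2).trans (le_max_right _ _)⟩⟩
  · intro hu hv heq
    set w : Euc n → ℝ := fun x => max (u x) (v x) with hw
    have hgu : ∀ x ∈ Ω, v x ≤ u x → HasGradientAt w (gradient u x) x := fun x hx hle =>
      hasGradientAt_max_left (hu.1 x hx) (hv.1 x hx) (heq x hx) hle
    have hgv : ∀ x ∈ Ω, u x ≤ v x → HasGradientAt w (gradient v x) x := fun x hx hle =>
      hasGradientAt_max_right (hu.1 x hx) (hv.1 x hx) (heq x hx) hle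
    have hdw : ∀ x ∈ Ω, DifferentiableAt ℝ w x := by
      intro x hx
      rcases le_total (v x) (u x) with h | h
      exacts [(hgu x hx h).differentiableAt, (hgv x hx h).differentiableAt]
    have hgwu : ∀ x ∈ Ω, v x ≤ u x → gradient w x = gradient u x := fun x hx h =>
      (hgu x hx h).gradient
    have hgwv : ∀ x ∈ Ω, u x ≤ v x → gradient w x = gradient v x := fun x hx h =>
      (hgv x hx h).gradient
    refine ⟨hdw, ?_, ?_⟩
    · -- continuity of the gradient
      intro x hx
      rcases lt_trichotomy (u x) (v x) with hlt | heqx | hlt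
      · have hpos : ∀ᶠ y in nhds x, u y < v y := by
          have hcont : ContinuousAt (fun y => v y - u y) x :=
            (hv.1 x hx).continuousAt.sub (hu.1 x hx).continuousAt
          have hmem : Set.Ioi (0:ℝ) ∈ nhds (v x - u x) := Ioi_mem_nhds (by linarith)
          filter_upwards [hcont hmem] with y hy
          simpa [sub_pos] using hy
        have hev : (fun y => gradient w y) =ᶠ[nhdsWithin x Ω] fun y => gradient v y := by
          filter_upwards [hpos.filter_mono nhdsWithin_le_nhds, eventually_mem_nhdsWithin]
            with y hy hyΩ using hgwv y hyΩ hy.le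
        exact (hv.2.1 x hx).congr_of_eventuallyEq hev (hgwv x hx hlt.le)
      · -- equal values: squeeze
        have hp : gradient w x = gradient u x := hgwu x hx heqx.ge
        have hpv : gradient u x = gradient v x := heq x hx heqx
        rw [ContinuousWithinAt, hp]
        rw [tendsto_iff_dist_tendsto_zero]
        have hb : ∀ᶠ y in nhdsWithin x Ω,
            dist (gradient w y) (gradient u x) ≤
              dist (gradient u y) (gradient u x) + dist (gradient v y) (gradient u x) := by
          filter_upwards [eventually_mem_nhdsWithin] with y hyΩ
          rcases le_total (v y) (u y) with h | h
          · rw [hgwu y hyΩ h]; exact le_add_of_nonneg_right dist_nonneg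
          · rw [hgwv y hyΩ h]; exact le_add_of_nonneg_left dist_nonneg
        have h1 : Tendsto (fun y => dist (gradient u y) (gradient u x)) (nhdsWithin x Ω)
            (nhds 0) := by
          simpa using (hu.2.1 x hx).dist tendsto_const_nhds (b := gradient u x)
        have h2 : Tendsto (fun y => dist (gradient v y) (gradient u x)) (nhdsWithin x Ω)
            (nhds 0) := by
          have := (hv.2.1 x hx).dist (tendsto_const_nhds (x := gradient u x))
          simpa [← hpv] using this
        exact squeeze_zero' (Filter.Eventually.of_forall fun y => dist_nonneg) hb
          (by simpa using h1.add h2)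
      · have hpos : ∀ᶠ y in nhds x, v y < u y := by
          have hcont : ContinuousAt (fun y => u y - v y) x :=
            (hu.1 x hx).continuousAt.sub (hv.1 x hx).continuousAt
          have hmem : Set.Ioi (0:ℝ) ∈ nhds (u x - v x) := Ioi_mem_nhds (by linarith)
          filter_upwards [hcont hmem] with y hy
          simpa [sub_pos] using hy
        have hev : (fun y => gradient w y) =ᶠ[nhdsWithin x Ω] fun y => gradient u y := by
          filter_upwards [hpos.filter_mono nhdsWithin_le_nhds, eventually_mem_nhdsWithin]
            with y hy hyΩ using hgwu y hyΩ hy.le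
        exact (hu.2.1 x hx).congr_of_eventuallyEq hev (hgwu x hx hlt.le)
    · -- local Lipschitz gradient
      intro x hx
      obtain ⟨ε₁, hε₁, K₁, hK₁⟩ := hu.2.2 x hx
      obtain ⟨ε₂, hε₂, K₂, hK₂⟩ := hv.2.2 x hx
      obtain ⟨ε₃, hε₃, hball⟩ := Metric.isOpen_iff.mp hΩ x hx
      set ε := min ε₁ (min ε₂ ε₃) with hε
      have hεpos : 0 < ε := lt_min hε₁ (lt_min hε₂ hε₃)
      have hsub1 : ball x ε ∩ Ω ⊆ ball x ε₁ ∩ Ω :=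
        inter_subset_inter_left _ (ball_subset_ball (min_le_left _ _))
      have hsub2 : ball x ε ∩ Ω ⊆ ball x ε₂ ∩ Ω :=
        inter_subset_inter_left _ (ball_subset_ball ((min_le_right _ _).trans (min_le_left _ _)))
      have hsubΩ : ball x ε ⊆ Ω :=
        (ball_subset_ball ((min_le_right _ _).trans (min_le_right _ _))).trans hball
      rw [lipschitzOnWith_iff_dist_le_mul] at hK₁ hK₂
      refine ⟨ε, hεpos, K₁ ⊔ K₂, ?_⟩
      rw [lipschitzOnWith_iff_dist_le_mul]
      have hKle1 : (K₁ : ℝ) ≤ (K₁ ⊔ K₂ : ℝ≥0) := by exact_mod_cast le_max_left K₁ K₂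
      have hKle2 : (K₂ : ℝ) ≤ (K₁ ⊔ K₂ : ℝ≥0) := by exact_mod_cast le_max_right K₁ K₂
      have key : ∀ a ∈ ball x ε ∩ Ω, ∀ b ∈ ball x ε ∩ Ω, v a ≤ u a → u b ≤ v b →
          dist (gradient w a) (gradient w b) ≤ (K₁ ⊔ K₂ : ℝ≥0) * dist a b := by
        intro a ha b hb hua hvb
        -- find c on segment [a,b] with u c = v c
        have hseg : ∀ t : ℝ, t ∈ Icc (0:ℝ) 1 → a + t • (b - a) ∈ ball x ε ∩ Ω := by
          intro t ht
          have hc : a + t • (b - a) = (1 - t) • a + t • b := by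
            rw [smul_sub, sub_smul, one_smul]; abel
          have hmem : a + t • (b - a) ∈ ball x ε := by
            rw [hc]
            exact (convex_ball x ε) ha.1 hb.1 (by linarith [ht.1, ht.2]) ht.1 (by ring)
          exact ⟨hmem, hsubΩ hmem⟩
        have hφc : ContinuousOn (fun t : ℝ => u (a + t • (b - a)) - v (a + t • (b - a)))
            (Icc (0:ℝ) 1) := by
          intro t ht
          have hL : ContinuousAt (fun t : ℝ => a + t • (b - a)) t := by fun_prop
          have hΩt := (hseg t ht).2
          have h1 : ContinuousAt (u ∘ fun t : ℝ => a + t • (b - a)) t :=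
            ContinuousAt.comp (g := u) (f := fun t : ℝ => a + t • (b - a))
              (hu.1 _ hΩt).continuousAt hL
          have h2 : ContinuousAt (v ∘ fun t : ℝ => a + t • (b - a)) t :=
            ContinuousAt.comp (g := v) (f := fun t : ℝ => a + t • (b - a))
              (hv.1 _ hΩt).continuousAt hL
          exact (h1.sub h2).continuousWithinAt
        have h0 : (0:ℝ) ∈ Icc (u (a + (1:ℝ) • (b - a)) - v (a + (1:ℝ) • (b - a)))
            (u (a + (0:ℝ) • (b - a)) - v (a + (0:ℝ) • (b - a))) := by
          simp only [zero_smul, one_smul, add_zero, add_sub_cancel]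
          exact ⟨by linarith, by linarith⟩
        obtain ⟨t, ht, hφt⟩ := intermediate_value_Icc' (by norm_num : (0:ℝ) ≤ 1) hφc h0
        set c := a + t • (b - a) with hcdef
        have hcΩ := hseg t ht
        have hcuv : u c = v c := by
          have : u c - v c = 0 := hφt
          linarith
        have hgc : gradient u c = gradient v c := heq c hcΩ.2 hcuv
        have hdist : dist a c + dist c b = dist a b := by
          have h1 : dist a c = |t| * dist a b := by
            rw [dist_eq_norm, dist_eq_norm, hcdef]
            rw [show a - (a + t • (b - a)) = -(t • (b - a)) by abel, norm_neg, norm_smul]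
            rw [show ‖b - a‖ = ‖a - b‖ by rw [norm_sub_rev], Real.norm_eq_abs]
          have h2 : dist c b = |1 - t| * dist a b := by
            rw [dist_eq_norm, dist_eq_norm, hcdef]
            rw [show a + t • (b - a) - b = -((1 - t) • (b - a)) by
              rw [sub_smul, one_smul]; abel, norm_neg, norm_smul]
            rw [show ‖b - a‖ = ‖a - b‖ by rw [norm_sub_rev], Real.norm_eq_abs]
          rw [h1, h2, abs_of_nonneg ht.1, abs_of_nonneg (by linarith [ht.2] : (0:ℝ) ≤ 1 - t)]
          ring
        calc dist (gradient w a) (gradient w b)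
            = dist (gradient u a) (gradient v b) := by rw [hgwu a ha.2 hua, hgwv b hb.2 hvb]
          _ ≤ dist (gradient u a) (gradient u c) + dist (gradient v c) (gradient v b) := by
              rw [← hgc] at *
              exact dist_triangle _ _ _
          _ ≤ (K₁ : ℝ) * dist a c + (K₂ : ℝ) * dist c b := by
              gcongr
              · exact hK₁ _ (hsub1 ha) _ (hsub1 hcΩ)
              · exact hK₂ _ (hsub2 hcΩ) _ (hsub2 hb)
          _ ≤ (K₁ ⊔ K₂ : ℝ≥0) * dist a c + (K₁ ⊔ K₂ : ℝ≥0) * dist c b := by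
              exact add_le_add (mul_le_mul_of_nonneg_right hKle1 dist_nonneg)
                (mul_le_mul_of_nonneg_right hKle2 dist_nonneg)
          _ = (K₁ ⊔ K₂ : ℝ≥0) * dist a b := by rw [← mul_add, hdist]
      intro a ha b hb
      rcases le_total (v a) (u a) with h1 | h1 <;> rcases le_total (v b) (u b) with h2 | h2
      · rw [hgwu a ha.2 h1, hgwu b hb.2 h2]
        exact le_trans (hK₁ _ (hsub1 ha) _ (hsub1 hb)) (by gcongr)
      · exact key a ha b hb h1 h2
      · rw [dist_comm, dist_comm a b]
        exact key b hb a ha h2 h1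
      · rw [hgwv a ha.2 h1, hgwv b hb.2 h2]
        exact le_trans (hK₂ _ (hsub2 ha) _ (hsub2 hb)) (by gcongr)
end
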